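/- For every channel Λ : M_{d_A}(ℂ) → M_{d_B}(ℂ) and every n ∈ ℕ, the channel tempered negativity is supermultiplicative under tensor powers: N_τ(Λ^{⊗n}) ≥ N_τ(Λ)^n. -/

import Mathlib

open Matrix
open scoped ComplexOrder

section Defs

variable {ιA ιB : Type*}

def ptranspose (M : Matrix (ιA × ιB) (ιA × ιB) ℂ) : Matrix (ιA × ιB) (ιA × ιB) ℂ :=
  Matrix.of fun p q => M (p.1, q.2) (q.1, p.2)

def IsPPT [Fintype ιA] [Fintype ιB] (M : Matrix (ιA × ιB) (ιA × ιB) ℂ) : Prop :=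
  M.PosSemidef ∧ (ptranspose M).PosSemidef

def IsState {ι : Type*} [Fintype ι] (ρ : Matrix ι ι ℂ) : Prop :=
  ρ.PosSemidef ∧ ρ.trace = 1

def idTensor (ιR : Type*) (Φ : Matrix ιA ιA ℂ →ₗ[ℂ] Matrix ιB ιB ℂ) :
    Matrix (ιR × ιA) (ιR × ιA) ℂ →ₗ[ℂ] Matrix (ιR × ιB) (ιR × ιB) ℂ where
  toFun M := Matrix.of fun p q => Φ (Matrix.of fun a b => M (p.1, a) (q.1, b)) p.2 q.2
  map_add' M N := by
    funext p q
    show Φ ((Matrix.of fun a b => M (p.1, a) (q.1, b)) + (Matrix.of fun a b => N (p.1, a) (q.1, b))) p.2 q.2 = _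
    rw [map_add]
    rfl
  map_smul' c M := by
    funext p q
    show Φ (c • (Matrix.of fun a b => M (p.1, a) (q.1, b))) p.2 q.2 = _
    rw [_root_.map_smul]
    rfl

noncomputable def opNorm {ι : Type*} [Fintype ι] [DecidableEq ι] (M : Matrix ι ι ℂ) : ℝ :=
  ‖Matrix.toEuclideanCLM (𝕜 := ℂ) (n := ι) M‖

noncomputable def traceNorm {ι : Type*} [Fintype ι] [DecidableEq ι] (M : Matrix ι ι ℂ) : ℝ :=
  ((((Matrix.posSemidef_conjTranspose_mul_self M).1.eigenvectorUnitary : Matrix ι ι ℂ) *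
    Matrix.diagonal (fun i => ((Real.sqrt ((Matrix.posSemidef_conjTranspose_mul_self M).1.eigenvalues i) : ℝ) : ℂ)) *
    (star (Matrix.posSemidef_conjTranspose_mul_self M).1.eigenvectorUnitary : Matrix ι ι ℂ)).trace).re

/-- The tempered negativity `N_τ(ρ|ω)`. -/
noncomputable def temperedNegRel [Fintype ιA] [Fintype ιB] [DecidableEq ιA] [DecidableEq ιB]
    (ρ ω : Matrix (ιA × ιB) (ιA × ιB) ℂ) : ℝ :=
  sSup {t : ℝ | ∃ X : Matrix (ιA × ιB) (ιA × ιB) ℂ, X.IsHermitian ∧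
    opNorm (ptranspose X) ≤ 1 ∧ opNorm X = ((X * ω).trace).re ∧ t = ((X * ρ).trace).re}

noncomputable def temperedNeg [Fintype ιA] [Fintype ιB] [DecidableEq ιA] [DecidableEq ιB]
    (ρ : Matrix (ιA × ιB) (ιA × ιB) ℂ) : ℝ :=
  temperedNegRel ρ ρ

/-- The tempered PPT robustness `R^τ(ρ|ω)`, via `1 + 2 R^τ(ρ|ω) = sup {...}`. -/
noncomputable def temperedRobRel [Fintype ιA] [Fintype ιB] [DecidableEq ιA] [DecidableEq ιB]
    (ρ ω : Matrix (ιA × ιB) (ιA × ιB) ℂ) : ℝ :=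
  (sSup {t : ℝ | ∃ X : Matrix (ιA × ιB) (ιA × ιB) ℂ, X.IsHermitian ∧
    (∀ W : Matrix (ιA × ιB) (ιA × ιB) ℂ, IsPPT W → |((X * W).trace).re| ≤ (W.trace).re) ∧
    opNorm X = ((X * ω).trace).re ∧ t = ((X * ρ).trace).re} - 1) / 2

noncomputable def temperedRob [Fintype ιA] [Fintype ιB] [DecidableEq ιA] [DecidableEq ιB]
    (ρ : Matrix (ιA × ιB) (ιA × ιB) ℂ) : ℝ :=
  temperedRobRel ρ ρ

/-- The channel tempered negativity. -/
noncomputable def chanTemperedNeg [Fintype ιA] [Fintype ιB] [DecidableEq ιA] [DecidableEq ιB]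
    (Λ : Matrix ιA ιA ℂ →ₗ[ℂ] Matrix ιB ιB ℂ) : ℝ :=
  sSup {t : ℝ | ∃ ρ : Matrix (ιA × ιA) (ιA × ιA) ℂ, IsState ρ ∧
    t = temperedNeg ((idTensor ιA Λ) ρ)}

/-- The channel tempered robustness `R^τ(Λ'|Λ)`. -/
noncomputable def chanTemperedRobRel [Fintype ιA] [Fintype ιB] [DecidableEq ιA] [DecidableEq ιB]
    (Λ' Λ : Matrix ιA ιA ℂ →ₗ[ℂ] Matrix ιB ιB ℂ) : ℝ :=
  sSup {t : ℝ | ∃ ρ : Matrix (ιA × ιA) (ιA × ιA) ℂ, IsState ρ ∧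
    t = temperedRobRel ((idTensor ιA Λ') ρ) ((idTensor ιA Λ) ρ)}

/-- The diamond norm. -/
noncomputable def diamondNorm [Fintype ιA] [Fintype ιB] [DecidableEq ιA] [DecidableEq ιB]
    (Φ : Matrix ιA ιA ℂ →ₗ[ℂ] Matrix ιB ιB ℂ) : ℝ :=
  sSup {t : ℝ | ∃ ρ : Matrix (ιA × ιA) (ιA × ιA) ℂ, IsState ρ ∧
    t = traceNorm ((idTensor ιA Φ) ρ)}

/-- The `n`-fold tensor power of a linear map on matrices. -/
noncomputable def tensorPow [Fintype ιA] [DecidableEq ιA] (n : ℕ)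
    (Λ : Matrix ιA ιA ℂ →ₗ[ℂ] Matrix ιB ιB ℂ) :
    Matrix (Fin n → ιA) (Fin n → ιA) ℂ →ₗ[ℂ] Matrix (Fin n → ιB) (Fin n → ιB) ℂ where
  toFun M := Matrix.of fun p q => ∑ a : Fin n → ιA, ∑ b : Fin n → ιA,
      M a b * ∏ i, Λ (Matrix.single (a i) (b i) 1) (p i) (q i)
  map_add' M N := by
    funext p q
    simp [Matrix.add_apply, add_mul, Finset.sum_add_distrib]
  map_smul' c M := by
    funext p q
    simp [Matrix.smul_apply, Finset.mul_sum, mul_assoc]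

/-- The `n`-fold tensor power of a bipartite state, regarded as bipartite across the `Aⁿ:Bⁿ` cut. -/
noncomputable def statePow (n : ℕ) (ρ : Matrix (ιA × ιB) (ιA × ιB) ℂ) :
    Matrix ((Fin n → ιA) × (Fin n → ιB)) ((Fin n → ιA) × (Fin n → ιB)) ℂ :=
  Matrix.of fun p q => ∏ i, ρ (p.1 i, p.2 i) (q.1 i, q.2 i)

/-- The Choi matrix `J_Φ = (1/d_A) ∑_{ij} |i⟩⟨j| ⊗ Φ(|i⟩⟨j|)`. -/
noncomputable def choi [Fintype ιA] [DecidableEq ιA]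
    (Φ : Matrix ιA ιA ℂ →ₗ[ℂ] Matrix ιB ιB ℂ) : Matrix (ιA × ιB) (ιA × ιB) ℂ :=
  Matrix.of fun p q => (Fintype.card ιA : ℂ)⁻¹ * Φ (Matrix.single p.1 q.1 1) p.2 q.2


/-- Complete positivity. -/
def IsCP [Fintype ιA] [Fintype ιB] (Φ : Matrix ιA ιA ℂ →ₗ[ℂ] Matrix ιB ιB ℂ) : Prop :=
  ∀ (k : ℕ) (X : Matrix (Fin k × ιA) (Fin k × ιA) ℂ), X.PosSemidef →
    ((idTensor (Fin k) Φ) X).PosSemidef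

/-- Trace preservation. -/
def IsTP [Fintype ιA] [Fintype ιB] (Φ : Matrix ιA ιA ℂ →ₗ[ℂ] Matrix ιB ιB ℂ) : Prop :=
  ∀ X : Matrix ιA ιA ℂ, (Φ X).trace = X.trace

/-- A quantum channel: completely positive and trace preserving. -/
def IsChannel [Fintype ιA] [Fintype ιB] (Φ : Matrix ιA ιA ℂ →ₗ[ℂ] Matrix ιB ιB ℂ) : Prop :=
  IsCP Φ ∧ IsTP Φ

/-- A map is PPT-binding if `id_k ⊗ Φ` sends positive semidefinite matrices to PPT matrices. -/
def PPTBinding [Fintype ιA] [Fintype ιB] (Φ : Matrix ιA ιA ℂ →ₗ[ℂ] Matrix ιB ιB ℂ) : Prop :=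
  ∀ (k : ℕ) (X : Matrix (Fin k × ιA) (Fin k × ιA) ℂ), X.PosSemidef →
    IsPPT ((idTensor (Fin k) Φ) X)

/-- A PPT-binding channel. -/
def PPTBindingChannel [Fintype ιA] [Fintype ιB] (Φ : Matrix ιA ιA ℂ →ₗ[ℂ] Matrix ιB ιB ℂ) : Prop :=
  IsChannel Φ ∧ PPTBinding Φ

/-- The channel robustness with respect to PPT-binding channels. -/
noncomputable def RKE [Fintype ιA] [Fintype ιB] (Λ : Matrix ιA ιA ℂ →ₗ[ℂ] Matrix ιB ιB ℂ) : ℝ :=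
  sInf {l : ℝ | 0 ≤ l ∧ ∃ Γ Θ : Matrix ιA ιA ℂ →ₗ[ℂ] Matrix ιB ιB ℂ,
    PPTBindingChannel Γ ∧ PPTBindingChannel Θ ∧ Λ + (l : ℂ) • Γ = ((1 + l : ℝ) : ℂ) • Θ}

/-- The PPT robustness of a state. -/
noncomputable def RPPT [Fintype ιA] [Fintype ιB] (ρ : Matrix (ιA × ιB) (ιA × ιB) ℂ) : ℝ :=
  sInf {t : ℝ | ∃ δ : Matrix (ιA × ιB) (ιA × ιB) ℂ, IsPPT δ ∧ IsPPT (ρ + δ) ∧ (δ.trace).re = t}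


end Defs

section Aux

set_option linter.unusedSectionVars false
set_option maxHeartbeats 1000000

namespace SMaux
open Matrix

section OpNormBasic
variable {ι κ : Type*} [Fintype ι] [DecidableEq ι] [Fintype κ] [DecidableEq κ]

lemma opNorm_nonneg (M : Matrix ι ι ℂ) : 0 ≤ opNorm M := norm_nonneg _

lemma mulVec_norm_le (M : Matrix ι ι ℂ) (x : ι → ℂ) :
    Real.sqrt (∑ i, ‖(M *ᵥ x) i‖^2) ≤ opNorm M * Real.sqrt (∑ i, ‖x i‖^2) := by
  have h := (Matrix.toEuclideanCLM (𝕜 := ℂ) (n := ι) M).le_opNorm ((WithLp.equiv 2 (ι → ℂ)).symm x)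
  rw [EuclideanSpace.norm_eq, EuclideanSpace.norm_eq] at h
  convert h using 3 <;> rfl

lemma mulVec_sq_le (M : Matrix ι ι ℂ) (x : ι → ℂ) :
    ∑ i, ‖(M *ᵥ x) i‖^2 ≤ (opNorm M)^2 * ∑ i, ‖x i‖^2 := by
  have h := mulVec_norm_le M x
  have h1 : (0:ℝ) ≤ ∑ i, ‖(M *ᵥ x) i‖^2 := Finset.sum_nonneg fun i _ => sq_nonneg _
  have h2 : (0:ℝ) ≤ ∑ i, ‖x i‖^2 := Finset.sum_nonneg fun i _ => sq_nonneg _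
  have := mul_self_le_mul_self (Real.sqrt_nonneg _) h
  rw [Real.mul_self_sqrt h1] at this
  calc ∑ i, ‖(M *ᵥ x) i‖^2 ≤ (opNorm M * Real.sqrt (∑ i, ‖x i‖^2)) *
      (opNorm M * Real.sqrt (∑ i, ‖x i‖^2)) := this
    _ = (opNorm M)^2 * ∑ i, ‖x i‖^2 := by
        rw [mul_mul_mul_comm, Real.mul_self_sqrt h2]; ring

lemma opNorm_le_of_mulVec (M : Matrix ι ι ℂ) {c : ℝ} (hc : 0 ≤ c)
    (h : ∀ x : ι → ℂ, ∑ i, ‖(M *ᵥ x) i‖^2 ≤ c^2 * ∑ i, ‖x i‖^2) : opNorm M ≤ c := by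
  refine ContinuousLinearMap.opNorm_le_bound _ hc fun x => ?_
  rw [EuclideanSpace.norm_eq, EuclideanSpace.norm_eq]
  have hx := h (WithLp.equiv 2 (ι → ℂ) x)
  calc Real.sqrt (∑ i, ‖(Matrix.toEuclideanCLM (𝕜 := ℂ) (n := ι) M) x i‖^2)
      ≤ Real.sqrt (c^2 * ∑ i, ‖x i‖^2) := by
        apply Real.sqrt_le_sqrt
        convert hx using 2 <;> rfl
    _ = c * Real.sqrt (∑ i, ‖x i‖^2) := by
        rw [Real.sqrt_mul (sq_nonneg c), Real.sqrt_sq hc]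

lemma abs_entry_le_opNorm (M : Matrix ι ι ℂ) (i j : ι) : ‖M i j‖ ≤ opNorm M := by
  have h := mulVec_sq_le M (Pi.single j 1)
  have h1 : ∑ k, ‖Pi.single (M := fun _ : ι => ℂ) j 1 k‖^2 = 1 := by
    rw [Fintype.sum_eq_single j]
    · simp
    · intro k hk; simp [Pi.single_apply, hk]
  rw [h1, mul_one] at h
  have h2 : ‖M i j‖^2 ≤ ∑ k, ‖(M *ᵥ Pi.single j 1) k‖^2 := by
    have : ‖(M *ᵥ Pi.single j 1) i‖^2 ≤ ∑ k, ‖(M *ᵥ Pi.single j 1) k‖^2 :=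
      Finset.single_le_sum (f := fun k => ‖(M *ᵥ Pi.single j 1) k‖^2)
        (fun k _ => sq_nonneg _) (Finset.mem_univ i)
    simpa [Matrix.mulVec_single] using this
  have h3 := h2.trans h
  have h4 := Real.sqrt_le_sqrt h3
  rwa [Real.sqrt_sq (norm_nonneg _), Real.sqrt_sq (opNorm_nonneg M)] at h4

lemma opNorm_one_le : opNorm (1 : Matrix ι ι ℂ) ≤ 1 := by
  refine opNorm_le_of_mulVec _ zero_le_one fun x => ?_
  simp [Matrix.one_mulVec]

lemma opNorm_one [Nonempty ι] : opNorm (1 : Matrix ι ι ℂ) = 1 := by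
  refine le_antisymm opNorm_one_le ?_
  obtain ⟨i⟩ := ‹Nonempty ι›
  have := abs_entry_le_opNorm (1 : Matrix ι ι ℂ) i i
  simpa using this

lemma re_trace_mul_le (A σ : Matrix ι ι ℂ) (hσ : σ.PosSemidef) :
    ((A * σ).trace).re ≤ opNorm A * (σ.trace).re := by
  obtain ⟨B, rfl⟩ := (by open scoped MatrixOrder in exact CStarAlgebra.nonneg_iff_eq_star_mul_self.mp hσ.nonneg : ∃ B : Matrix ι ι ℂ, σ = Bᴴ * B)
  have key : ∀ i : ι, ((B * A * Bᴴ) i i).re ≤ opNorm A * ∑ k, ‖B i k‖^2 := by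
    intro i
    set v : EuclideanSpace ℂ ι := (WithLp.equiv 2 (ι → ℂ)).symm (fun k => (starRingEnd ℂ) (B i k)) with hv
    have hventry : ∀ k, v k = (starRingEnd ℂ) (B i k) := fun k => rfl
    have hBA : (B * A * Bᴴ) i i = @inner ℂ _ _ v ((Matrix.toEuclideanCLM (𝕜 := ℂ) (n := ι) A) v) := by
      rw [PiLp.inner_apply]
      have happ : ∀ j, ((Matrix.toEuclideanCLM (𝕜 := ℂ) (n := ι) A) v) j
          = ∑ k, A j k * (starRingEnd ℂ) (B i k) := fun j => rfl
      simp only [happ, hventry, Matrix.mul_apply, Matrix.conjTranspose_apply, RingHom.id_apply,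
        starRingEnd_apply, star_star]
      simp only [RCLike.inner_apply, starRingEnd_apply, star_star, Finset.sum_mul,
        Finset.mul_sum]
      rw [Finset.sum_comm]
      exact Finset.sum_congr rfl fun j _ => Finset.sum_congr rfl fun x _ => by ring
    have hnv : ‖v‖^2 = ∑ k, ‖B i k‖^2 := by
      rw [EuclideanSpace.norm_eq, Real.sq_sqrt (Finset.sum_nonneg fun _ _ => sq_nonneg _)]
      congr 1; ext k; rw [hventry]; simp
    rw [hBA]
    calc (@inner ℂ _ _ v ((Matrix.toEuclideanCLM (𝕜 := ℂ) (n := ι) A) v)).re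
        ≤ ‖@inner ℂ _ _ v ((Matrix.toEuclideanCLM (𝕜 := ℂ) (n := ι) A) v)‖ := Complex.re_le_norm _
      _ ≤ ‖v‖ * ‖(Matrix.toEuclideanCLM (𝕜 := ℂ) (n := ι) A) v‖ := norm_inner_le_norm _ _
      _ ≤ ‖v‖ * (opNorm A * ‖v‖) := by
          refine mul_le_mul_of_nonneg_left ?_ (norm_nonneg v)
          exact (Matrix.toEuclideanCLM (𝕜 := ℂ) (n := ι) A).le_opNorm v
      _ = opNorm A * ‖v‖^2 := by ring
      _ = opNorm A * ∑ k, ‖B i k‖^2 := by rw [hnv]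
  have htr : (A * (Bᴴ * B)).trace = (B * A * Bᴴ).trace := by
    rw [← Matrix.mul_assoc, Matrix.trace_mul_comm, ← Matrix.mul_assoc]
  have htr2 : ((Bᴴ * B).trace).re = ∑ i, ∑ k, ‖B i k‖^2 := by
    rw [Matrix.trace]
    rw [Complex.re_sum]
    rw [Finset.sum_comm]
    congr 1; ext i
    rw [Matrix.diag_apply, Matrix.mul_apply, Complex.re_sum]
    congr 1; ext k
    simp [Matrix.conjTranspose_apply, Complex.normSq_apply, ← Complex.normSq_eq_norm_sq,
      mul_comm, Complex.mul_re]
  rw [htr, htr2, Matrix.trace, Complex.re_sum, Finset.mul_sum]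
  exact Finset.sum_le_sum fun i _ => key i

lemma opNorm_submatrix_le (M : Matrix ι ι ℂ) (e : κ ≃ ι) :
    opNorm (M.submatrix e e) ≤ opNorm M := by
  refine opNorm_le_of_mulVec _ (opNorm_nonneg M) fun x => ?_
  have hmv : ∀ k, ((M.submatrix e e) *ᵥ x) k = (M *ᵥ (x ∘ e.symm)) (e k) := by
    intro k
    simp only [Matrix.mulVec, Matrix.submatrix_apply, dotProduct, Function.comp]
    exact Finset.sum_equiv e (by simp) (by simp)
  calc ∑ k, ‖((M.submatrix e e) *ᵥ x) k‖^2 = ∑ k, ‖(M *ᵥ (x ∘ e.symm)) (e k)‖^2 := by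
        simp only [hmv]
    _ = ∑ i, ‖(M *ᵥ (x ∘ e.symm)) i‖^2 := Fintype.sum_equiv e _ _ (fun k => rfl)
    _ ≤ (opNorm M)^2 * ∑ i, ‖(x ∘ e.symm) i‖^2 := mulVec_sq_le M _
    _ = (opNorm M)^2 * ∑ k, ‖x k‖^2 := by
        congr 1
        exact Fintype.sum_equiv e.symm _ _ (fun i => rfl)

lemma opNorm_submatrix (M : Matrix ι ι ℂ) (e : κ ≃ ι) :
    opNorm (M.submatrix e e) = opNorm M := by
  refine le_antisymm (opNorm_submatrix_le M e) ?_
  have h := opNorm_submatrix_le (M.submatrix e e) e.symm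
  simpa [Matrix.submatrix_submatrix, Function.comp] using h

/-- Kronecker product (local definition). -/
def kron (A : Matrix ι ι ℂ) (B : Matrix κ κ ℂ) : Matrix (ι × κ) (ι × κ) ℂ :=
  Matrix.of fun p q => A p.1 q.1 * B p.2 q.2

lemma opNorm_kron_le (A : Matrix ι ι ℂ) (B : Matrix κ κ ℂ) :
    opNorm (kron A B) ≤ opNorm A * opNorm B := by
  refine opNorm_le_of_mulVec _ (mul_nonneg (opNorm_nonneg A) (opNorm_nonneg B)) fun x => ?_
  have hz : ∀ i k, ((kron A B) *ᵥ x) (i,k) = (A *ᵥ (fun j => (B *ᵥ fun l => x (j, l)) k)) i := by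
    intro i k
    simp only [Matrix.mulVec, dotProduct, kron, Matrix.of_apply]
    rw [Fintype.sum_prod_type]
    refine Finset.sum_congr rfl fun j _ => ?_
    rw [Finset.mul_sum]
    exact Finset.sum_congr rfl fun l _ => by ring
  calc ∑ p : ι × κ, ‖((kron A B) *ᵥ x) p‖^2
      = ∑ k, ∑ i, ‖(A *ᵥ (fun j => (B *ᵥ fun l => x (j, l)) k)) i‖^2 := by
        rw [Fintype.sum_prod_type, Finset.sum_comm]
        exact Finset.sum_congr rfl fun k _ => Finset.sum_congr rfl fun i _ => by rw [hz i k]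
    _ ≤ ∑ k, ((opNorm A)^2 * ∑ i, ‖(B *ᵥ fun l => x (i, l)) k‖^2) :=
        Finset.sum_le_sum fun k _ => mulVec_sq_le A (fun j => (B *ᵥ fun l => x (j, l)) k)
    _ = (opNorm A)^2 * ∑ i, ∑ k, ‖(B *ᵥ fun l => x (i, l)) k‖^2 := by
        rw [← Finset.mul_sum, Finset.sum_comm]
    _ ≤ (opNorm A)^2 * ((opNorm B)^2 * ∑ p : ι × κ, ‖x p‖^2) := by
        refine mul_le_mul_of_nonneg_left ?_ (sq_nonneg _)
        rw [Fintype.sum_prod_type, Finset.mul_sum]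
        refine Finset.sum_le_sum fun i _ => ?_
        exact mulVec_sq_le B (fun l => x (i, l))
    _ = (opNorm A * opNorm B)^2 * ∑ p : ι × κ, ‖x p‖^2 := by ring

end OpNormBasic

section StatePow
variable {α β : Type*}

def pairSuccEquiv (n : ℕ) (α β : Type*) :
    ((Fin (n+1) → α) × (Fin (n+1) → β)) ≃ ((α × β) × ((Fin n → α) × (Fin n → β))) where
  toFun pq := ((pq.1 0, pq.2 0), (fun i => pq.1 i.succ, fun i => pq.2 i.succ))
  invFun x := (Fin.cons x.1.1 x.2.1, Fin.cons x.1.2 x.2.2)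
  left_inv := by
    rintro ⟨p, q⟩
    simp only [Prod.mk.injEq]
    exact ⟨Fin.cons_self_tail p, Fin.cons_self_tail q⟩
  right_inv := by
    rintro ⟨⟨a, b⟩, ⟨p, q⟩⟩
    simp [Fin.cons_zero, Fin.cons_succ]

lemma statePow_zeroth (M : Matrix (α × β) (α × β) ℂ) : statePow 0 M = 1 := by
  ext p q
  have hpq : p = q := Subsingleton.elim p q
  subst hpq
  simp [statePow, Matrix.one_apply_eq]

lemma statePow_succ [Fintype α] [Fintype β] (n : ℕ) (M : Matrix (α × β) (α × β) ℂ) :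
    statePow (n+1) M = (kron M (statePow n M)).submatrix (pairSuccEquiv n α β) (pairSuccEquiv n α β) := by
  ext p q
  show ∏ i, M (p.1 i, p.2 i) (q.1 i, q.2 i) = _
  rw [Fin.prod_univ_succ]
  rfl

lemma opNorm_statePow_le [Fintype α] [DecidableEq α] [Fintype β] [DecidableEq β]
    (n : ℕ) (M : Matrix (α × β) (α × β) ℂ) :
    opNorm (statePow n M) ≤ (opNorm M)^n := by
  induction n with
  | zero => rw [statePow_zeroth, pow_zero]; convert opNorm_one_le (ι := (Fin 0 → α) × (Fin 0 → β))
  | succ n ih =>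
      rw [statePow_succ, opNorm_submatrix]
      calc opNorm (kron M (statePow n M)) ≤ opNorm M * opNorm (statePow n M) := opNorm_kron_le _ _
        _ ≤ opNorm M * (opNorm M)^n :=
            mul_le_mul_of_nonneg_left ih (opNorm_nonneg M)
        _ = (opNorm M)^(n+1) := by ring

variable [Fintype α] [Fintype β]

lemma sum_pair_prod {n : ℕ} (f : Fin n → α × β → ℂ) :
    ∑ R : (Fin n → α) × (Fin n → β), ∏ i, f i (R.1 i, R.2 i) = ∏ i, ∑ s : α × β, f i s := by
  rw [Finset.prod_univ_sum]
  rw [Fintype.piFinset_univ]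
  refine (Fintype.sum_equiv (Equiv.arrowProdEquivProdArrow (Fin n) (fun _ => α) (fun _ => β)) _ _ fun g => ?_).symm
  simp [Equiv.arrowProdEquivProdArrow]

lemma statePow_mul {n : ℕ} (M N : Matrix (α × β) (α × β) ℂ) :
    statePow n M * statePow n N = statePow n (M * N) := by
  ext p q
  show ∑ R : (Fin n → α) × (Fin n → β), (∏ i, M (p.1 i, p.2 i) (R.1 i, R.2 i)) *
      ∏ i, N (R.1 i, R.2 i) (q.1 i, q.2 i) = ∏ i, (M * N) (p.1 i, p.2 i) (q.1 i, q.2 i)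
  have hd : ∀ R : (Fin n → α) × (Fin n → β), (∏ i, M (p.1 i, p.2 i) (R.1 i, R.2 i)) *
      ∏ i, N (R.1 i, R.2 i) (q.1 i, q.2 i)
      = ∏ i, (M (p.1 i, p.2 i) (R.1 i, R.2 i) * N (R.1 i, R.2 i) (q.1 i, q.2 i)) := by
    intro R; rw [Finset.prod_mul_distrib]
  rw [Finset.sum_congr rfl fun R _ => hd R]
  rw [sum_pair_prod (fun i s => M (p.1 i, p.2 i) s * N s (q.1 i, q.2 i))]
  exact Finset.prod_congr rfl fun i _ => (Matrix.mul_apply).symm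

lemma statePow_trace {n : ℕ} (M : Matrix (α × β) (α × β) ℂ) :
    (statePow n M).trace = M.trace ^ n := by
  rw [Matrix.trace]
  simp only [Matrix.diag_apply]
  calc ∑ P : (Fin n → α) × (Fin n → β), statePow n M P P
      = ∑ P : (Fin n → α) × (Fin n → β), ∏ i, M (P.1 i, P.2 i) (P.1 i, P.2 i) :=
        Finset.sum_congr rfl fun P _ => rfl
    _ = ∏ _i : Fin n, ∑ s : α × β, M s s := sum_pair_prod (fun _ s => M s s)
    _ = M.trace ^ n := by
        rw [Finset.prod_const]
        simp [Matrix.trace]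

lemma statePow_conjTranspose {n : ℕ} (M : Matrix (α × β) (α × β) ℂ) :
    (statePow n M)ᴴ = statePow n Mᴴ := by
  ext p q
  simp only [Matrix.conjTranspose_apply, statePow, Matrix.of_apply]
  rw [star_prod]

lemma statePow_isHermitian {n : ℕ} {M : Matrix (α × β) (α × β) ℂ} (h : M.IsHermitian) :
    (statePow n M).IsHermitian := by
  show _ = _
  rw [statePow_conjTranspose, h.eq]

lemma statePow_posSemidef {n : ℕ} {M : Matrix (α × β) (α × β) ℂ} (h : M.PosSemidef) :
    (statePow n M).PosSemidef := by
  obtain ⟨B, rfl⟩ := (by open scoped MatrixOrder in classical exact CStarAlgebra.nonneg_iff_eq_star_mul_self.mp h.nonneg : ∃ B : Matrix (α × β) (α × β) ℂ, M = Bᴴ * B)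
  rw [← statePow_mul, ← statePow_conjTranspose]
  exact Matrix.posSemidef_conjTranspose_mul_self _

lemma ptranspose_statePow {ιA ιB : Type*} {n : ℕ} (M : Matrix (ιA × ιB) (ιA × ιB) ℂ) :
    ptranspose (statePow n M) = statePow n (ptranspose M) := rfl

end StatePow

section Channel
variable {ιA ιB ιR : Type*} [Fintype ιA] [DecidableEq ιA] [Fintype ιB] [DecidableEq ιB]

lemma linmap_apply_expand (Φ : Matrix ιA ιA ℂ →ₗ[ℂ] Matrix ιB ιB ℂ) (N : Matrix ιA ιA ℂ)
    (p q : ιB) : Φ N p q = ∑ st : ιA × ιA, N st.1 st.2 * Φ (single st.1 st.2 1) p q := by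
  rw [Fintype.sum_prod_type]
  conv_lhs => rw [matrix_eq_sum_single N]
  rw [map_sum, Matrix.sum_apply]
  refine Finset.sum_congr rfl fun s _ => ?_
  rw [map_sum, Matrix.sum_apply]
  refine Finset.sum_congr rfl fun t _ => ?_
  have h1 : single s t (N s t) = N s t • single s t (1:ℂ) := by
    rw [smul_single, smul_eq_mul, mul_one]
  rw [h1, _root_.map_smul, Matrix.smul_apply, smul_eq_mul]

lemma trace_idTensor [Fintype ιR] (Φ : Matrix ιA ιA ℂ →ₗ[ℂ] Matrix ιB ιB ℂ) (hTP : IsTP Φ)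
    (M : Matrix (ιR × ιA) (ιR × ιA) ℂ) : ((idTensor ιR Φ) M).trace = M.trace := by
  rw [Matrix.trace, Matrix.trace, Fintype.sum_prod_type, Fintype.sum_prod_type]
  refine Finset.sum_congr rfl fun r _ => ?_
  calc ∑ b, Matrix.diag ((idTensor ιR Φ) M) (r, b)
      = (Φ (Matrix.of fun a a' => M (r,a) (r,a'))).trace := by
        rw [Matrix.trace]; exact Finset.sum_congr rfl fun b _ => rfl
    _ = (Matrix.of fun a a' => M (r,a) (r,a')).trace := hTP _
    _ = ∑ a, Matrix.diag M (r,a) := by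
        rw [Matrix.trace]; exact Finset.sum_congr rfl fun a _ => rfl

lemma idTensor_tensorPow_statePow (Λ : Matrix ιA ιA ℂ →ₗ[ℂ] Matrix ιB ιB ℂ) (n : ℕ)
    (ρ : Matrix (ιA × ιA) (ιA × ιA) ℂ) :
    (idTensor (Fin n → ιA) (tensorPow n Λ)) (statePow n ρ) = statePow n ((idTensor ιA Λ) ρ) := by
  ext P Q
  show ∑ a : Fin n → ιA, ∑ b : Fin n → ιA,
      (∏ i, ρ ((P.1 i, a i)) ((Q.1 i, b i))) * ∏ i, Λ (single (a i) (b i) 1) (P.2 i) (Q.2 i)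
      = ∏ i, ((idTensor ιA Λ) ρ) (P.1 i, P.2 i) (Q.1 i, Q.2 i)
  calc ∑ a : Fin n → ιA, ∑ b : Fin n → ιA,
        (∏ i, ρ ((P.1 i, a i)) ((Q.1 i, b i))) * ∏ i, Λ (single (a i) (b i) 1) (P.2 i) (Q.2 i)
      = ∑ R : (Fin n → ιA) × (Fin n → ιA),
        (∏ i, ρ ((P.1 i, R.1 i)) ((Q.1 i, R.2 i))) * ∏ i, Λ (single (R.1 i) (R.2 i) 1) (P.2 i) (Q.2 i) :=
        (Fintype.sum_prod_type (f := fun R : (Fin n → ιA) × (Fin n → ιA) =>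
          (∏ i, ρ ((P.1 i, R.1 i)) ((Q.1 i, R.2 i))) * ∏ i, Λ (single (R.1 i) (R.2 i) 1) (P.2 i) (Q.2 i))).symm
    _ = ∑ R : (Fin n → ιA) × (Fin n → ιA), ∏ i,
          (ρ ((P.1 i, R.1 i)) ((Q.1 i, R.2 i)) * Λ (single (R.1 i) (R.2 i) 1) (P.2 i) (Q.2 i)) := by
        exact Finset.sum_congr rfl fun R _ => (Finset.prod_mul_distrib).symm
    _ = ∏ i, ∑ st : ιA × ιA,
          ρ ((P.1 i, st.1)) ((Q.1 i, st.2)) * Λ (single st.1 st.2 1) (P.2 i) (Q.2 i) :=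
        sum_pair_prod (fun i st => ρ ((P.1 i, st.1)) ((Q.1 i, st.2)) * Λ (single st.1 st.2 1) (P.2 i) (Q.2 i))
    _ = ∏ i, ((idTensor ιA Λ) ρ) (P.1 i, P.2 i) (Q.1 i, Q.2 i) := by
        refine Finset.prod_congr rfl fun i _ => ?_
        exact (linmap_apply_expand Λ (Matrix.of fun s t => ρ ((P.1 i, s)) ((Q.1 i, t))) (P.2 i) (Q.2 i)).symm

end Channel

section States
variable {ι : Type*} [Fintype ι] [DecidableEq ι]

lemma state_diag (ρ : Matrix ι ι ℂ) (h : ρ.PosSemidef) (i : ι) : 0 ≤ ρ i i := by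
  have := h.dotProduct_mulVec_nonneg (Pi.single i 1)
  simpa [dotProduct, Matrix.mulVec, Pi.single_apply, Finset.sum_ite_eq,
    Matrix.mulVec_single] using this

lemma state_diag_le_one (ρ : Matrix ι ι ℂ) (h : IsState ρ) (i : ι) : (ρ i i).re ≤ 1 := by
  have h1 : ∀ k, 0 ≤ ρ k k := state_diag ρ h.1
  have h2 : (ρ.trace).re = ∑ k, (ρ k k).re := by
    rw [Matrix.trace, Complex.re_sum]; rfl
  have h3 : ∑ k, (ρ k k).re = 1 := by rw [← h2, h.2]; rfl
  have h4 : ∀ k, 0 ≤ (ρ k k).re := fun k => (Complex.le_def.mp (h1 k)).1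
  calc (ρ i i).re ≤ ∑ k, (ρ k k).re :=
        Finset.single_le_sum (fun k _ => h4 k) (Finset.mem_univ i)
    _ = 1 := h3

lemma state_entry_le_one (ρ : Matrix ι ι ℂ) (h : IsState ρ) (i j : ι) : ‖ρ i j‖ ≤ 1 := by
  by_cases hij : i = j
  · subst hij
    have h0 := state_diag ρ h.1 i
    have him : (ρ i i).im = 0 := (Complex.le_def.mp h0).2.symm
    have : ‖ρ i i‖ = (ρ i i).re := by
      rw [Complex.norm_def, Complex.normSq_apply, him]
      simp [Real.sqrt_mul_self (Complex.le_def.mp h0).1]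
    rw [this]; exact state_diag_le_one ρ h i
  · by_cases hz : ρ i j = 0
    · simp [hz]
    set c : ℂ := -((starRingEnd ℂ) (ρ i j)) / (‖ρ i j‖ : ℂ) with hc
    set x : ι → ℂ := Pi.single i 1 + Pi.single j c with hx
    have hpsd := h.1.dotProduct_mulVec_nonneg x
    have hherm : ρ j i = (starRingEnd ℂ) (ρ i j) := by
      have h5 := h.1.1
      calc ρ j i = ρᴴ j i := by rw [h5]
        _ = (starRingEnd ℂ) (ρ i j) := rfl
    have hxv : ∀ k, x k = (if k = i then 1 else 0) + (if k = j then c else 0) := by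
      intro k; simp [hx, Pi.single_apply]
    have hdot : dotProduct (star x) (ρ *ᵥ x)
        = ρ i i + c * ρ i j + (starRingEnd ℂ) c * ρ j i + (starRingEnd ℂ) c * c * ρ j j := by
      simp only [dotProduct, Pi.star_apply, Matrix.mulVec, hxv]
      have expand : ∀ k, star ((if k = i then (1:ℂ) else 0) + if k = j then c else 0) *
          ∑ l, ρ k l * ((if l = i then (1:ℂ) else 0) + if l = j then c else 0)
          = ((if k = i then (1:ℂ) else 0) + if k = j then star c else 0) * (ρ k i + ρ k j * c) := by
        intro k
        congr 1
        · simp [star_add, apply_ite (star : ℂ → ℂ)]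
        · simp [mul_add, mul_ite, mul_one, mul_zero, Finset.sum_add_distrib,
            Finset.sum_ite_eq', Finset.mem_univ]
      rw [Finset.sum_congr rfl fun k _ => expand k]
      simp only [add_mul, ite_mul, one_mul, zero_mul, Finset.sum_add_distrib,
        Finset.sum_ite_eq', Finset.mem_univ, if_true, starRingEnd_apply]
      ring
    have hnz : (‖ρ i j‖ : ℂ) ≠ 0 := by
      simp only [ne_eq, Complex.ofReal_eq_zero, norm_eq_zero]; exact hz
    have hc1 : c * ρ i j = -(‖ρ i j‖ : ℂ) := by
      rw [hc]
      field_simp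
      rw [mul_comm ((starRingEnd ℂ) (ρ i j)) (ρ i j), Complex.mul_conj]
      rw [Complex.normSq_eq_norm_sq, pow_two]
      push_cast
      ring
    have hc2 : (starRingEnd ℂ) c * ρ j i = -(‖ρ i j‖ : ℂ) := by
      rw [hherm, ← RingHom.map_mul, hc1]
      simp
    have hc3 : (starRingEnd ℂ) c * c = 1 := by
      have hcn : ‖c‖ = 1 := by
        rw [hc]
        rw [norm_div, norm_neg, RCLike.norm_conj]
        simp [hz]
      calc (starRingEnd ℂ) c * c = ((‖c‖^2 : ℝ) : ℂ) := by
            rw [mul_comm, Complex.mul_conj, Complex.normSq_eq_norm_sq,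
              pow_two]
        _ = 1 := by rw [hcn]; norm_num
    rw [hdot, hc1, hc2, hc3, one_mul] at hpsd
    have hre := (Complex.le_def.mp hpsd).1
    simp only [Complex.add_re, Complex.neg_re, Complex.ofReal_re, Complex.zero_re] at hre
    have hi1 := state_diag_le_one ρ h i
    have hj1 := state_diag_le_one ρ h j
    linarith

end States

section Feasible
variable {ιA ιB : Type*} [Fintype ιA] [DecidableEq ιA] [Fintype ιB] [DecidableEq ιB]

/-- The feasible set of the tempered negativity. -/
def S (ρ ω : Matrix (ιA × ιB) (ιA × ιB) ℂ) : Set ℝ :=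
  {t : ℝ | ∃ X : Matrix (ιA × ιB) (ιA × ιB) ℂ, X.IsHermitian ∧
    opNorm (ptranspose X) ≤ 1 ∧ opNorm X = ((X * ω).trace).re ∧ t = ((X * ρ).trace).re}

lemma temperedNegRel_eq_sSup (ρ ω : Matrix (ιA × ιB) (ιA × ιB) ℂ) :
    temperedNegRel ρ ω = sSup (S ρ ω) := rfl

lemma ptranspose_entry (X : Matrix (ιA × ιB) (ιA × ιB) ℂ) (p q : ιA × ιB) :
    X p q = ptranspose X (p.1, q.2) (q.1, p.2) := rfl

lemma trace_mul_expand (X ρ : Matrix (ιA × ιB) (ιA × ιB) ℂ) :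
    (X * ρ).trace = ∑ p, ∑ q, X p q * ρ q p := by
  rw [Matrix.trace]
  exact Finset.sum_congr rfl fun p _ => Matrix.mul_apply

lemma S_le_bound (ρ ω : Matrix (ιA × ιB) (ιA × ιB) ℂ) {t : ℝ} (ht : t ∈ S ρ ω) :
    t ≤ ∑ p, ∑ q, ‖ρ p q‖ := by
  obtain ⟨X, hX, hpt, -, rfl⟩ := ht
  have hent : ∀ p q, ‖X p q‖ ≤ 1 := fun p q =>
    le_trans (le_of_eq (congrArg norm (ptranspose_entry X p q)))
      (le_trans (abs_entry_le_opNorm _ _ _) hpt)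
  calc ((X * ρ).trace).re ≤ ‖(X * ρ).trace‖ := Complex.re_le_norm _
    _ = ‖∑ p, ∑ q, X p q * ρ q p‖ := by rw [trace_mul_expand]
    _ ≤ ∑ p, ∑ q, ‖X p q * ρ q p‖ := by
        refine (norm_sum_le _ _).trans (Finset.sum_le_sum fun p _ => norm_sum_le _ _)
    _ ≤ ∑ p, ∑ q, ‖ρ q p‖ := by
        refine Finset.sum_le_sum fun p _ => Finset.sum_le_sum fun q _ => ?_
        rw [norm_mul]
        calc ‖X p q‖ * ‖ρ q p‖ ≤ 1 * ‖ρ q p‖ :=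
              mul_le_mul_of_nonneg_right (hent p q) (norm_nonneg _)
          _ = ‖ρ q p‖ := one_mul _
    _ = ∑ p, ∑ q, ‖ρ p q‖ := Finset.sum_comm

lemma bddAbove_S (ρ ω : Matrix (ιA × ιB) (ιA × ιB) ℂ) : BddAbove (S ρ ω) :=
  ⟨∑ p, ∑ q, ‖ρ p q‖, fun _ ht => S_le_bound ρ ω ht⟩

lemma temperedNegRel_le (ρ ω : Matrix (ιA × ιB) (ιA × ιB) ℂ) :
    temperedNegRel ρ ω ≤ ∑ p, ∑ q, ‖ρ p q‖ :=
  Real.sSup_le (fun _ ht => S_le_bound ρ ω ht)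
    (Finset.sum_nonneg fun p _ => Finset.sum_nonneg fun q _ => norm_nonneg _)

lemma ptranspose_one : ptranspose (1 : Matrix (ιA × ιB) (ιA × ιB) ℂ) = 1 := by
  ext ⟨p1, p2⟩ ⟨q1, q2⟩
  show (1 : Matrix (ιA × ιB) (ιA × ιB) ℂ) (p1, q2) (q1, p2) = _
  by_cases h1 : p1 = q1 <;> by_cases h2 : p2 = q2 <;>
    simp [Matrix.one_apply, Prod.ext_iff, h1, h2, eq_comm]

lemma im_trace_eq_zero {X σ : Matrix (ιA × ιB) (ιA × ιB) ℂ}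
    (hX : X.IsHermitian) (hσ : σ.IsHermitian) : ((X * σ).trace).im = 0 := by
  have hconj : (starRingEnd ℂ) ((X * σ).trace) = (X * σ).trace := by
    calc (starRingEnd ℂ) ((X * σ).trace) = ((X * σ)ᴴ).trace := (Matrix.trace_conjTranspose _).symm
      _ = (σᴴ * Xᴴ).trace := by rw [Matrix.conjTranspose_mul]
      _ = (σ * X).trace := by rw [hσ.eq, hX.eq]
      _ = (X * σ).trace := Matrix.trace_mul_comm _ _
  exact Complex.conj_eq_iff_im.mp hconj

lemma re_pow_of_im_zero {z : ℂ} (h : z.im = 0) (n : ℕ) : (z^n).re = z.re^n := by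
  have hz : z = ((z.re : ℝ) : ℂ) := Complex.ext rfl (by simp [h])
  conv_lhs => rw [hz]
  rw [← Complex.ofReal_pow, Complex.ofReal_re]

lemma one_mem_S {σ : Matrix (ιA × ιB) (ιA × ιB) ℂ} (hσ : IsState σ) : (1 : ℝ) ∈ S σ σ := by
  have hne : Nonempty (ιA × ιB) := by
    by_contra h
    rw [not_nonempty_iff] at h
    have h0 : σ.trace = 0 := by simp [Matrix.trace]
    rw [hσ.2] at h0
    exact one_ne_zero h0
  have htr : ((1 * σ).trace).re = 1 := by rw [one_mul, hσ.2]; rfl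
  exact ⟨1, Matrix.isHermitian_one, by rw [ptranspose_one, opNorm_one],
    by rw [opNorm_one, htr], htr.symm⟩

lemma temperedNeg_ge_one {σ : Matrix (ιA × ιB) (ιA × ιB) ℂ} (hσ : IsState σ) :
    1 ≤ temperedNeg σ :=
  le_csSup (bddAbove_S σ σ) (one_mem_S hσ)

lemma pow_sSup_le {T : Set ℝ} {D : ℝ} {n : ℕ} (hD : 0 ≤ D) (hone : n = 0 → 1 ≤ D)
    (h : ∀ v ∈ T, 0 ≤ v ∧ v ^ n ≤ D) : (sSup T) ^ n ≤ D := by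
  rcases Nat.eq_zero_or_pos n with h0 | hn
  · subst h0; simpa using hone rfl
  · have hub : ∀ v ∈ T, v ≤ D ^ ((n : ℝ)⁻¹) := by
      intro v hv
      obtain ⟨hv0, hvn⟩ := h v hv
      calc v = (v ^ n) ^ ((n : ℝ)⁻¹) := (Real.pow_rpow_inv_natCast hv0 hn.ne').symm
        _ ≤ D ^ ((n : ℝ)⁻¹) := Real.rpow_le_rpow (pow_nonneg hv0 n) hvn (by positivity)
    have hs : sSup T ≤ D ^ ((n : ℝ)⁻¹) := Real.sSup_le hub (Real.rpow_nonneg hD _)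
    have hnn : 0 ≤ sSup T := Real.sSup_nonneg (fun v hv => (h v hv).1)
    calc (sSup T) ^ n ≤ (D ^ ((n : ℝ)⁻¹)) ^ n := pow_le_pow_left₀ hnn hs n
      _ = D := Real.rpow_inv_natCast_pow hD hn.ne'

lemma chanSet_bddAbove (Φ : Matrix ιA ιA ℂ →ₗ[ℂ] Matrix ιB ιB ℂ) :
    BddAbove {t : ℝ | ∃ ρ : Matrix (ιA × ιA) (ιA × ιA) ℂ, IsState ρ ∧
      t = temperedNeg ((idTensor ιA Φ) ρ)} := by
  refine ⟨∑ p : ιA × ιB, ∑ q : ιA × ιB, ∑ st : ιA × ιA,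
    ‖Φ (single st.1 st.2 1) p.2 q.2‖, ?_⟩
  rintro t ⟨ρ, hρ, rfl⟩
  refine le_trans (temperedNegRel_le _ _) ?_
  refine Finset.sum_le_sum fun p _ => Finset.sum_le_sum fun q _ => ?_
  have hexp : ((idTensor ιA Φ) ρ) p q
      = ∑ st : ιA × ιA, ρ (p.1, st.1) (q.1, st.2) * Φ (single st.1 st.2 1) p.2 q.2 := by
    show Φ (Matrix.of fun a b => ρ (p.1, a) (q.1, b)) p.2 q.2 = _
    rw [linmap_apply_expand]
    rfl
  rw [hexp]
  refine (norm_sum_le _ _).trans (Finset.sum_le_sum fun st _ => ?_)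
  rw [norm_mul]
  calc ‖ρ (p.1, st.1) (q.1, st.2)‖ * ‖Φ (single st.1 st.2 1) p.2 q.2‖
      ≤ 1 * ‖Φ (single st.1 st.2 1) p.2 q.2‖ :=
        mul_le_mul_of_nonneg_right (state_entry_le_one ρ hρ _ _) (norm_nonneg _)
    _ = _ := one_mul _

lemma maximallyMixed_isState [Nonempty ιA] :
    IsState (((Fintype.card (ιA × ιA) : ℂ))⁻¹ • (1 : Matrix (ιA × ιA) (ιA × ιA) ℂ)) := by
  have hcard : (0 : ℝ) < (Fintype.card (ιA × ιA) : ℝ) := by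
    have h0 : 0 < Fintype.card (ιA × ιA) := Fintype.card_pos
    exact_mod_cast h0
  constructor
  · rw [Matrix.smul_one_eq_diagonal]
    refine Matrix.PosSemidef.diagonal ?_
    intro i
    rw [Complex.le_def]
    constructor
    · simp only [Complex.zero_re, ← Complex.ofReal_natCast, ← Complex.ofReal_inv,
        Complex.ofReal_re]
      positivity
    · simp [← Complex.ofReal_natCast, ← Complex.ofReal_inv]
  · rw [Matrix.trace_smul, Matrix.trace_one, smul_eq_mul]
    rw [inv_mul_cancel₀]
    exact_mod_cast hcard.ne'

end Feasible

end SMaux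

end Aux


/-- **Supermultiplicativity of the channel tempered negativity under tensor powers:**
`N_τ(Λ^{⊗n}) ≥ N_τ(Λ)^n` for every channel `Λ`. -/
theorem chanTemperedNeg_tensorPow_supermultiplicative {dA dB : ℕ}
    (Λ : Matrix (Fin dA) (Fin dA) ℂ →ₗ[ℂ] Matrix (Fin dB) (Fin dB) ℂ)
    (hΛ : IsChannel Λ) (n : ℕ) :
    chanTemperedNeg (tensorPow n Λ) ≥ (chanTemperedNeg Λ) ^ n := by
  classical
  by_cases hA : Nonempty (Fin dA)
  · -- main case: `Fin dA` is nonempty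
    set L := chanTemperedNeg (tensorPow n Λ) with hL
    -- every element of the defining set of `chanTemperedNeg Λ` satisfies `1 ≤ t` and `t ^ n ≤ L`
    have hmain : ∀ t ∈ {t : ℝ | ∃ ρ : Matrix (Fin dA × Fin dA) (Fin dA × Fin dA) ℂ, IsState ρ ∧
        t = temperedNeg ((idTensor (Fin dA) Λ) ρ)}, 1 ≤ t ∧ t ^ n ≤ L := by
      rintro t ⟨ρ, hρ, rfl⟩
      set σ := (idTensor (Fin dA) Λ) ρ with hσdef
      have hσ : IsState σ := ⟨hΛ.1 dA ρ hρ.1, by rw [SMaux.trace_idTensor Λ hΛ.2, hρ.2]⟩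
      have hσn : IsState (statePow n σ) :=
        ⟨SMaux.statePow_posSemidef hσ.1, by rw [SMaux.statePow_trace, hσ.2, one_pow]⟩
      have hρn : IsState (statePow n ρ) :=
        ⟨SMaux.statePow_posSemidef hρ.1, by rw [SMaux.statePow_trace, hρ.2, one_pow]⟩
      have hD1 : 1 ≤ temperedNeg (statePow n σ) := SMaux.temperedNeg_ge_one hσn
      have hDL : temperedNeg (statePow n σ) ≤ L := by
        refine le_csSup (SMaux.chanSet_bddAbove (tensorPow n Λ)) ?_
        exact ⟨statePow n ρ, hρn, by rw [SMaux.idTensor_tensorPow_statePow]⟩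
      have htrσn : ((statePow n σ).trace).re = 1 := by rw [hσn.2]; rfl
      have hstep : (temperedNeg σ) ^ n ≤ temperedNeg (statePow n σ) := by
        rw [temperedNeg, SMaux.temperedNegRel_eq_sSup]
        refine SMaux.pow_sSup_le (le_trans zero_le_one hD1) (fun _ => hD1) ?_
        rintro v ⟨X, hX, hpt, heq, rfl⟩
        have hv0 : 0 ≤ ((X * σ).trace).re := heq ▸ SMaux.opNorm_nonneg X
        refine ⟨hv0, ?_⟩
        have htrn : ((statePow n X * statePow n σ).trace).re = (((X * σ).trace).re) ^ n := by
          rw [SMaux.statePow_mul, SMaux.statePow_trace]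
          exact SMaux.re_pow_of_im_zero (SMaux.im_trace_eq_zero hX hσ.1.1) n
        have hnorm : opNorm (statePow n X) = ((statePow n X * statePow n σ).trace).re := by
          refine le_antisymm ?_ ?_
          · calc opNorm (statePow n X) ≤ (opNorm X) ^ n := SMaux.opNorm_statePow_le n X
              _ = (((X * σ).trace).re) ^ n := by rw [heq]
              _ = ((statePow n X * statePow n σ).trace).re := htrn.symm
          · calc ((statePow n X * statePow n σ).trace).re
                ≤ opNorm (statePow n X) * ((statePow n σ).trace).re :=
                  SMaux.re_trace_mul_le _ _ hσn.1
              _ = opNorm (statePow n X) := by rw [htrσn, mul_one]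
        refine le_csSup (SMaux.bddAbove_S _ _) ?_
        refine ⟨statePow n X, SMaux.statePow_isHermitian hX, ?_, hnorm, htrn.symm⟩
        rw [SMaux.ptranspose_statePow]
        exact le_trans (SMaux.opNorm_statePow_le n (ptranspose X))
          (pow_le_one₀ (SMaux.opNorm_nonneg _) hpt)
      have ht1 : 1 ≤ temperedNeg σ := SMaux.temperedNeg_ge_one hσ
      exact ⟨ht1, le_trans hstep hDL⟩
    have hne : ∃ t : ℝ, t ∈ {t : ℝ | ∃ ρ : Matrix (Fin dA × Fin dA) (Fin dA × Fin dA) ℂ,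
        IsState ρ ∧ t = temperedNeg ((idTensor (Fin dA) Λ) ρ)} := by
      refine ⟨_, ⟨((Fintype.card (Fin dA × Fin dA) : ℂ))⁻¹ • 1,
        SMaux.maximallyMixed_isState, rfl⟩⟩
    obtain ⟨t0, ht0⟩ := hne
    obtain ⟨ht01, ht0L⟩ := hmain t0 ht0
    have hL1 : 1 ≤ L := by
      calc (1:ℝ) = 1 ^ n := (one_pow n).symm
        _ ≤ t0 ^ n := pow_le_pow_left₀ zero_le_one ht01 n
        _ ≤ L := ht0L
    show (chanTemperedNeg Λ) ^ n ≤ L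
    rw [chanTemperedNeg]
    exact SMaux.pow_sSup_le (le_trans zero_le_one hL1) (fun _ => hL1)
      (fun t ht => ⟨le_trans zero_le_one (hmain t ht).1, (hmain t ht).2⟩)
  · -- degenerate case: `Fin dA` is empty
    have hempty : IsEmpty (Fin dA) := not_nonempty_iff.mp hA
    have hS1 : {t : ℝ | ∃ ρ : Matrix (Fin dA × Fin dA) (Fin dA × Fin dA) ℂ, IsState ρ ∧
        t = temperedNeg ((idTensor (Fin dA) Λ) ρ)} = ∅ := by
      ext t
      simp only [Set.mem_setOf_eq, Set.mem_empty_iff_false, iff_false, not_exists]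
      rintro ρ ⟨hρ, -⟩
      have h0 : ρ.trace = 0 := by simp [Matrix.trace]
      rw [hρ.2] at h0
      exact one_ne_zero h0
    have hN : chanTemperedNeg Λ = 0 := by
      rw [chanTemperedNeg, hS1, Real.sSup_empty]
    rcases n with _ | m
    · -- n = 0
      rw [hN, pow_zero]
      -- use the one-dimensional identity state
      set K := Fin 0 → Fin dA with hK
      have hρ0 : IsState (1 : Matrix (K × K) (K × K) ℂ) := by
        refine ⟨Matrix.PosSemidef.one, ?_⟩
        rw [Matrix.trace_one]
        simp
      have hσ0 : (idTensor K (tensorPow 0 Λ)) (1 : Matrix (K × K) (K × K) ℂ) = 1 := by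
        ext p q
        have hpq : p = q := Subsingleton.elim p q
        subst hpq
        show ∑ a : Fin 0 → Fin dA, ∑ b : Fin 0 → Fin dA,
            (1 : Matrix (K × K) (K × K) ℂ) (p.1, a) (p.1, b) *
              ∏ i : Fin 0, Λ (Matrix.single (a i) (b i) 1) (p.2 i) (p.2 i) = _
        rw [Fintype.sum_unique, Fintype.sum_unique]
        simp [Matrix.one_apply_eq]
      have hst : IsState ((idTensor K (tensorPow 0 Λ)) (1 : Matrix (K × K) (K × K) ℂ)) := by
        rw [hσ0]
        refine ⟨Matrix.PosSemidef.one, ?_⟩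
        rw [Matrix.trace_one]
        simp
      calc (1:ℝ) ≤ temperedNeg ((idTensor K (tensorPow 0 Λ)) (1 : Matrix (K × K) (K × K) ℂ)) :=
            SMaux.temperedNeg_ge_one hst
        _ ≤ chanTemperedNeg (tensorPow 0 Λ) :=
            le_csSup (SMaux.chanSet_bddAbove (tensorPow 0 Λ)) ⟨1, hρ0, rfl⟩
    · -- n = m + 1
      rw [hN, zero_pow (Nat.succ_ne_zero m)]
      have hS2 : {t : ℝ | ∃ ρ : Matrix ((Fin (m+1) → Fin dA) × (Fin (m+1) → Fin dA))
          ((Fin (m+1) → Fin dA) × (Fin (m+1) → Fin dA)) ℂ, IsState ρ ∧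
          t = temperedNeg ((idTensor (Fin (m+1) → Fin dA) (tensorPow (m+1) Λ)) ρ)} = ∅ := by
        ext t
        simp only [Set.mem_setOf_eq, Set.mem_empty_iff_false, iff_false, not_exists]
        rintro ρ ⟨hρ, -⟩
        have hie : IsEmpty (Fin (m+1) → Fin dA) := by
          rw [← not_nonempty_iff]
          rintro ⟨f⟩
          exact hempty.elim (f 0)
        have h0 : ρ.trace = 0 := by simp [Matrix.trace]
        rw [hρ.2] at h0
        exact one_ne_zero h0
      have : chanTemperedNeg (tensorPow (m+1) Λ) = 0 := by
        rw [chanTemperedNeg, hS2, Real.sSup_empty]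
      rw [this]
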